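/- In the same Weyl-type algebra, ∂̃_t Cas = (Cas - 3ℏ²/4) ∂̃_t - ℏ Q, where Cas = x² + y² + z² and Q = x∂_x + y∂_y + z∂_z. -/
import Mathlib

lemma dt_sq_aux {A : Type*} [Ring A] (c dt dx x : A)
    (hc : ∀ a : A, c * a = a * c)
    (e1 : dt * x = x * dt - c * dx)
    (e2 : dx * x = x * dx + c * dt) :
    dt * (x * x) = x * x * dt - (c * (x * dx) + c * (x * dx)) - c * c * dt := by
  calc dt * (x * x) = (dt * x) * x := (mul_assoc _ _ _).symm
    _ = (x * dt - c * dx) * x := by rw [e1]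
    _ = x * (dt * x) - c * (dx * x) := by noncomm_ring
    _ = x * (x * dt - c * dx) - c * (x * dx + c * dt) := by rw [e1, e2]
    _ = x * x * dt - x * c * dx - c * (x * dx) - c * c * dt := by noncomm_ring
    _ = _ := by rw [← hc x]; noncomm_ring

/-- In the Weyl-type algebra over `U(u(2)_ℏ)`,
`∂̃_t Cas = (Cas - 3ℏ²/4) ∂̃_t - ℏ Q`, where `Cas = x² + y² + z²` and
`Q = x∂_x + y∂_y + z∂_z`. -/
theorem dt_Cas_relation (A : Type*) [Ring A] [Algebra ℂ A] (ℏ : ℂ)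
    (t x y z dt dx dy dz : A)
    (hxy : x * y - y * x = ℏ • z)
    (hyz : y * z - z * y = ℏ • x)
    (hzx : z * x - x * z = ℏ • y)
    (htx : t * x = x * t) (hty : t * y = y * t) (htz : t * z = z * t)
    -- the partial derivatives pairwise commute
    (hdxy : dx * dy = dy * dx) (hdxz : dx * dz = dz * dx)
    (hdyz : dy * dz = dz * dy)
    (hdtx : dt * dx = dx * dt) (hdty : dt * dy = dy * dt)
    (hdtz : dt * dz = dz * dt)
    -- permutation relations of ∂̃_t with the generators
    (h1 : dt * t - t * dt = (ℏ / 2) • dt)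
    (h2 : dt * x - x * dt = -((ℏ / 2) • dx))
    (h3 : dt * y - y * dt = -((ℏ / 2) • dy))
    (h4 : dt * z - z * dt = -((ℏ / 2) • dz))
    -- permutation relations of ∂_x with the generators
    (h5 : dx * t - t * dx = (ℏ / 2) • dx)
    (h6 : dx * x - x * dx = (ℏ / 2) • dt)
    (h7 : dx * y - y * dx = (ℏ / 2) • dz)
    (h8 : dx * z - z * dx = -((ℏ / 2) • dy))
    -- permutation relations of ∂_y with the generators
    (h9 : dy * t - t * dy = (ℏ / 2) • dy)
    (h10 : dy * x - x * dy = -((ℏ / 2) • dz))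
    (h11 : dy * y - y * dy = (ℏ / 2) • dt)
    (h12 : dy * z - z * dy = (ℏ / 2) • dx)
    -- permutation relations of ∂_z with the generators
    (h13 : dz * t - t * dz = (ℏ / 2) • dz)
    (h14 : dz * x - x * dz = (ℏ / 2) • dy)
    (h15 : dz * y - y * dz = -((ℏ / 2) • dx))
    (h16 : dz * z - z * dz = (ℏ / 2) • dt)
    :
    let Cas : A := x ^ 2 + y ^ 2 + z ^ 2
    let Q : A := x * dx + y * dy + z * dz
    dt * Cas = (Cas - (3 * ℏ ^ 2 / 4) • (1 : A)) * dt - ℏ • Q := by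
  intro Cas Q
  set c : A := algebraMap ℂ A (ℏ / 2) with hcdef
  have hc : ∀ a : A, c * a = a * c := fun a => Algebra.commutes _ a
  have e2 : dt * x = x * dt - c * dx := by
    rw [Algebra.smul_def] at h2; rw [sub_eq_iff_eq_add] at h2; rw [h2]; abel
  have e3 : dt * y = y * dt - c * dy := by
    rw [Algebra.smul_def] at h3; rw [sub_eq_iff_eq_add] at h3; rw [h3]; abel
  have e4 : dt * z = z * dt - c * dz := by
    rw [Algebra.smul_def] at h4; rw [sub_eq_iff_eq_add] at h4; rw [h4]; abel
  have e6 : dx * x = x * dx + c * dt := by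
    rw [Algebra.smul_def] at h6; rw [sub_eq_iff_eq_add] at h6; rw [h6]; abel
  have e11 : dy * y = y * dy + c * dt := by
    rw [Algebra.smul_def] at h11; rw [sub_eq_iff_eq_add] at h11; rw [h11]; abel
  have e16 : dz * z = z * dz + c * dt := by
    rw [Algebra.smul_def] at h16; rw [sub_eq_iff_eq_add] at h16; rw [h16]; abel
  have hx := dt_sq_aux c dt dx x hc e2 e6
  have hy := dt_sq_aux c dt dy y hc e3 e11
  have hz := dt_sq_aux c dt dz z hc e4 e16
  have hs1 : (3 * ℏ ^ 2 / 4 : ℂ) • (1 : A) = c * c + c * c + c * c := by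
    rw [Algebra.smul_def, mul_one,
      show (3 * ℏ ^ 2 / 4 : ℂ) = (ℏ/2) * (ℏ/2) + (ℏ/2) * (ℏ/2) + (ℏ/2) * (ℏ/2) by ring,
      map_add, map_add, map_mul]
  have hs2 : ℏ • (x * dx + y * dy + z * dz) =
      c * (x * dx + y * dy + z * dz) + c * (x * dx + y * dy + z * dz) := by
    have h : ℏ • (x * dx + y * dy + z * dz)
        = (ℏ/2) • (x * dx + y * dy + z * dz) + (ℏ/2) • (x * dx + y * dy + z * dz) := by
      rw [← add_smul]; ring_nf
    rw [h, Algebra.smul_def]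
  show dt * (x ^ 2 + y ^ 2 + z ^ 2) =
      (x ^ 2 + y ^ 2 + z ^ 2 - (3 * ℏ ^ 2 / 4) • (1 : A)) * dt
        - ℏ • (x * dx + y * dy + z * dz)
  rw [pow_two x, pow_two y, pow_two z]
  rw [mul_add, mul_add, hx, hy, hz, hs1, hs2]
  noncomm_ring
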